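/- Let X be a complete CAT(0) metric space, let B be a countable nonempty closed bounded subset of X, and let (B_n) be an increasing sequence of nonempty finite subsets of B whose union is dense in B. Then the circumradii r(B_n) converge to r(B), and the circumcenters c(B_n) converge to c(B). -/

import Mathlib

open Metric Filter

/-- CAT(0) for a metric space, via existence of midpoints satisfying the
CN (Bruhat–Tits) comparison inequality. -/
def IsCAT0 (X : Type*) [MetricSpace X] : Prop :=
  ∀ y z : X, ∃ m : X, dist y m = dist y z / 2 ∧ dist z m = dist y z / 2 ∧
    ∀ x : X, dist x m ^ 2 ≤ dist x y ^ 2 / 2 + dist x z ^ 2 / 2 - dist y z ^ 2 / 4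

/-- The circumradius of a subset. -/
noncomputable def circumradius {X : Type*} [MetricSpace X] (B : Set X) : ℝ :=
  sInf {r : ℝ | 0 ≤ r ∧ ∃ x : X, B ⊆ closedBall x r}

/-- The circumcenter of a subset (well defined for nonempty bounded closed subsets
of a complete CAT(0) space). -/
noncomputable def circumcenter {X : Type*} [MetricSpace X] [Nonempty X] (B : Set X) : X :=
  Classical.epsilon fun x : X => B ⊆ closedBall x (circumradius B)

section Aux

variable {X : Type*} [MetricSpace X]

lemma radSet_bddBelow (B : Set X) :
    BddBelow {r : ℝ | 0 ≤ r ∧ ∃ x : X, B ⊆ closedBall x r} :=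
  ⟨0, fun _ hr => hr.1⟩

lemma radSet_nonempty {B : Set X} (hB : Bornology.IsBounded B) (hne : B.Nonempty) :
    {r : ℝ | 0 ≤ r ∧ ∃ x : X, B ⊆ closedBall x r}.Nonempty := by
  obtain ⟨c, _⟩ := hne
  obtain ⟨r, hr⟩ := hB.subset_closedBall c
  exact ⟨max r 0, le_max_right _ _, c,
    hr.trans (closedBall_subset_closedBall (le_max_left _ _))⟩

lemma circumradius_nonneg' {B : Set X} (hB : Bornology.IsBounded B) (hne : B.Nonempty) :
    0 ≤ circumradius B :=
  le_csInf (radSet_nonempty hB hne) fun _ hr => hr.1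

lemma circumradius_le' {B : Set X} {x : X} {r : ℝ} (h0 : 0 ≤ r) (h : B ⊆ closedBall x r) :
    circumradius B ≤ r :=
  csInf_le (radSet_bddBelow B) ⟨h0, x, h⟩

lemma circumradius_mono' {A B : Set X} (hAB : A ⊆ B) (hB : Bornology.IsBounded B)
    (hne : B.Nonempty) : circumradius A ≤ circumradius B :=
  csInf_le_csInf (radSet_bddBelow A) (radSet_nonempty hB hne)
    (fun _ hr => ⟨hr.1, hr.2.choose, hAB.trans hr.2.choose_spec⟩)

/-- Key CN-inequality consequence: two approximate circumcenters are close. -/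
lemma dist_sq_le_of_covers (hX : IsCAT0 X) {B : Set X} (hne : B.Nonempty) {y z : X}
    {s t : ℝ} (hy : B ⊆ closedBall y s) (hz : B ⊆ closedBall z t) :
    dist y z ^ 2 ≤ 2 * s ^ 2 + 2 * t ^ 2 - 4 * circumradius B ^ 2 := by
  obtain ⟨m, _, _, hm⟩ := hX y z
  obtain ⟨b0, hb0⟩ := hne
  have hball : ∀ b ∈ B, dist b m ^ 2 ≤ s ^ 2 / 2 + t ^ 2 / 2 - dist y z ^ 2 / 4 := by
    intro b hb
    have h1 : dist b y ^ 2 ≤ s ^ 2 := pow_le_pow_left₀ dist_nonneg (hy hb) 2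
    have h2 : dist b z ^ 2 ≤ t ^ 2 := pow_le_pow_left₀ dist_nonneg (hz hb) 2
    have h3 := hm b
    have h4 : dist b y = dist y b := dist_comm b y
    have h5 : dist b z = dist z b := dist_comm b z
    linarith [h3]
  set ρ2 := s ^ 2 / 2 + t ^ 2 / 2 - dist y z ^ 2 / 4 with hρ2def
  have hρ2nn : 0 ≤ ρ2 := le_trans (sq_nonneg _) (hball b0 hb0)
  have hsubm : B ⊆ closedBall m (Real.sqrt ρ2) := by
    intro b hb
    rw [mem_closedBall, ← Real.sqrt_sq (dist_nonneg (x := b) (y := m))]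
    exact Real.sqrt_le_sqrt (hball b hb)
  have hr : circumradius B ≤ Real.sqrt ρ2 := circumradius_le' (Real.sqrt_nonneg _) hsubm
  have hr0 : 0 ≤ circumradius B :=
    le_csInf ⟨Real.sqrt ρ2, Real.sqrt_nonneg _, m, hsubm⟩ fun _ h => h.1
  have hrsq : circumradius B ^ 2 ≤ ρ2 := by
    have := pow_le_pow_left₀ hr0 hr 2
    rwa [Real.sq_sqrt hρ2nn] at this
  rw [hρ2def] at hrsq
  linarith

lemma circumcenter_unique' (hX : IsCAT0 X) {B : Set X} (hne : B.Nonempty) {y z : X}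
    (hy : B ⊆ closedBall y (circumradius B)) (hz : B ⊆ closedBall z (circumradius B)) :
    y = z := by
  have h := dist_sq_le_of_covers hX hne hy hz
  have h2 : dist y z ^ 2 = 0 := le_antisymm (by linarith) (sq_nonneg _)
  exact dist_eq_zero.mp (pow_eq_zero_iff (by norm_num : (2:ℕ) ≠ 0) |>.mp h2)

/-- Existence of the circumcenter in a complete CAT(0) space. -/
lemma exists_circumcenter [CompleteSpace X] (hX : IsCAT0 X) {B : Set X}
    (hne : B.Nonempty) (hbd : Bornology.IsBounded B) :
    ∃ x : X, B ⊆ closedBall x (circumradius B) := by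
  set r := circumradius B with hrdef
  have hr0 : 0 ≤ r := circumradius_nonneg' hbd hne
  have hu : ∀ k : ℕ, ∃ x : X, B ⊆ closedBall x (r + 1 / (k + 1)) := by
    intro k
    have hpos : (0 : ℝ) < 1 / (k + 1) := by positivity
    obtain ⟨s, hsS, hslt⟩ := exists_lt_of_csInf_lt (radSet_nonempty hbd hne)
      (lt_add_of_pos_right r hpos)
    obtain ⟨x, hx⟩ := hsS.2
    exact ⟨x, hx.trans (closedBall_subset_closedBall hslt.le)⟩
  choose u hub using hu
  have hcauchy : CauchySeq u := by
    apply cauchySeq_of_le_tendsto_0 (fun N : ℕ => 2 * Real.sqrt ((r + 1 / (N + 1)) ^ 2 - r ^ 2))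
    · intro n m N hn hm
      have hεn : (1 : ℝ) / (n + 1) ≤ 1 / (N + 1) := by
        apply one_div_le_one_div_of_le (by positivity)
        exact_mod_cast Nat.succ_le_succ hn
      have hεm : (1 : ℝ) / (m + 1) ≤ 1 / (N + 1) := by
        apply one_div_le_one_div_of_le (by positivity)
        exact_mod_cast Nat.succ_le_succ hm
      have h := dist_sq_le_of_covers hX hne (hub n) (hub m)
      have hq1 : (r + 1 / (n + 1 : ℝ)) ^ 2 ≤ (r + 1 / (N + 1)) ^ 2 := by
        apply pow_le_pow_left₀ (by positivity) (by linarith) 2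
      have hq2 : (r + 1 / (m + 1 : ℝ)) ^ 2 ≤ (r + 1 / (N + 1)) ^ 2 := by
        apply pow_le_pow_left₀ (by positivity) (by linarith) 2
      have hA : (0 : ℝ) ≤ (r + 1 / (N + 1)) ^ 2 - r ^ 2 := by
        have : r ^ 2 ≤ (r + 1 / (N + 1 : ℝ)) ^ 2 := by
          apply pow_le_pow_left₀ hr0 _ 2
          have : (0:ℝ) < 1 / (N + 1) := by positivity
          linarith
        linarith
      have hd2 : dist (u n) (u m) ^ 2 ≤ 4 * ((r + 1 / (N + 1)) ^ 2 - r ^ 2) := by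
        rw [hrdef] at h; linarith
      calc dist (u n) (u m) = Real.sqrt (dist (u n) (u m) ^ 2) :=
            (Real.sqrt_sq dist_nonneg).symm
        _ ≤ Real.sqrt (4 * ((r + 1 / (N + 1)) ^ 2 - r ^ 2)) := Real.sqrt_le_sqrt hd2
        _ = 2 * Real.sqrt ((r + 1 / (N + 1)) ^ 2 - r ^ 2) := by
            rw [show (4 : ℝ) * ((r + 1 / (N + 1)) ^ 2 - r ^ 2)
                = 2 ^ 2 * ((r + 1 / (N + 1)) ^ 2 - r ^ 2) by ring,
              Real.sqrt_mul (by positivity), Real.sqrt_sq (by norm_num)]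
    · have h0 : Tendsto (fun N : ℕ => 1 / ((N : ℝ) + 1)) atTop (nhds 0) :=
        tendsto_one_div_add_atTop_nhds_zero_nat
      have hc : Continuous fun t : ℝ => 2 * Real.sqrt ((r + t) ^ 2 - r ^ 2) := by
        fun_prop
      have := (hc.tendsto 0).comp h0
      simpa [Function.comp_def] using this
  obtain ⟨x, hx⟩ := cauchySeq_tendsto_of_complete hcauchy
  refine ⟨x, fun b hb => ?_⟩
  rw [mem_closedBall]
  have h1 : Tendsto (fun k => dist b (u k)) atTop (nhds (dist b x)) :=
    tendsto_const_nhds.dist hx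
  have h2 : Tendsto (fun k : ℕ => r + 1 / ((k : ℝ) + 1)) atTop (nhds r) := by
    have := tendsto_const_nhds (x := r) (f := atTop (α := ℕ)) |>.add
      tendsto_one_div_add_atTop_nhds_zero_nat
    simpa using this
  exact le_of_tendsto_of_tendsto' h1 h2 fun k => hub k hb

lemma circumcenter_spec [CompleteSpace X] [Nonempty X] (hX : IsCAT0 X) {B : Set X}
    (hne : B.Nonempty) (hbd : Bornology.IsBounded B) :
    B ⊆ closedBall (circumcenter B) (circumradius B) :=
  Classical.epsilon_spec (exists_circumcenter hX hne hbd)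

end Aux

/-- Lemma 2.2: circumradii and circumcenters of an exhausting increasing sequence of
finite subsets converge to those of the countable closed bounded set. -/
theorem stmt1 {X : Type*} [MetricSpace X] [CompleteSpace X] [Nonempty X]
    (hX : IsCAT0 X)
    (B : Set X) (hBcount : B.Countable) (hBne : B.Nonempty) (hBcl : IsClosed B)
    (hBbd : Bornology.IsBounded B)
    (Bn : ℕ → Set X) (hfin : ∀ n, (Bn n).Finite) (hne : ∀ n, (Bn n).Nonempty)
    (hsub : ∀ n, Bn n ⊆ B) (hmono : Monotone Bn)
    (hdense : B = closure (⋃ n, Bn n)) :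
    Tendsto (fun n => circumradius (Bn n)) atTop (nhds (circumradius B)) ∧
      Tendsto (fun n => circumcenter (Bn n)) atTop (nhds (circumcenter B)) := by
  have hbdn : ∀ n, Bornology.IsBounded (Bn n) := fun n => (hfin n).isBounded
  set r := circumradius B with hrdef
  set rn : ℕ → ℝ := fun n => circumradius (Bn n) with hrndef
  have hrn0 : ∀ n, 0 ≤ rn n := fun n => circumradius_nonneg' (hbdn n) (hne n)
  have hrnr : ∀ n, rn n ≤ r := fun n => circumradius_mono' (hsub n) hBbd hBne
  have hrnmono : Monotone rn := fun n m hnm => circumradius_mono' (hmono hnm) (hbdn m) (hne m)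
  have hbdd : BddAbove (Set.range rn) := ⟨r, by rintro _ ⟨n, rfl⟩; exact hrnr n⟩
  set ρ := ⨆ n, rn n with hρdef
  have hrnρ : ∀ n, rn n ≤ ρ := fun n => le_ciSup hbdd n
  have hρ0 : 0 ≤ ρ := le_trans (hrn0 0) (hrnρ 0)
  have hρr : ρ ≤ r := ciSup_le hrnr
  have htρ : Tendsto rn atTop (nhds ρ) := tendsto_atTop_ciSup hrnmono hbdd
  set c : ℕ → X := fun n => circumcenter (Bn n) with hcdef
  have hcspec : ∀ n, Bn n ⊆ closedBall (c n) (rn n) :=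
    fun n => circumcenter_spec hX (hne n) (hbdn n)
  have hkey : ∀ n m : ℕ, dist (c n) (c m) ^ 2 ≤ 4 * ρ ^ 2 - 4 * rn (min n m) ^ 2 := by
    intro n m
    have h1 : Bn (min n m) ⊆ closedBall (c n) (rn n) :=
      (hmono (min_le_left n m)).trans (hcspec n)
    have h2 : Bn (min n m) ⊆ closedBall (c m) (rn m) :=
      (hmono (min_le_right n m)).trans (hcspec m)
    have h := dist_sq_le_of_covers hX (hne (min n m)) h1 h2
    have e1 : rn n ^ 2 ≤ ρ ^ 2 := pow_le_pow_left₀ (hrn0 n) (hrnρ n) 2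
    have e2 : rn m ^ 2 ≤ ρ ^ 2 := pow_le_pow_left₀ (hrn0 m) (hrnρ m) 2
    linarith
  have hcauchy : CauchySeq c := by
    apply cauchySeq_of_le_tendsto_0 (fun N : ℕ => 2 * Real.sqrt (ρ ^ 2 - rn N ^ 2))
    · intro n m N hn hm
      have hmin : N ≤ min n m := le_min hn hm
      have e3 : rn N ^ 2 ≤ rn (min n m) ^ 2 :=
        pow_le_pow_left₀ (hrn0 N) (hrnmono hmin) 2
      have h := hkey n m
      have hA : 0 ≤ ρ ^ 2 - rn N ^ 2 := by
        have := pow_le_pow_left₀ (hrn0 N) (hrnρ N) 2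
        linarith
      have hd2 : dist (c n) (c m) ^ 2 ≤ 4 * (ρ ^ 2 - rn N ^ 2) := by linarith
      calc dist (c n) (c m) = Real.sqrt (dist (c n) (c m) ^ 2) :=
            (Real.sqrt_sq dist_nonneg).symm
        _ ≤ Real.sqrt (4 * (ρ ^ 2 - rn N ^ 2)) := Real.sqrt_le_sqrt hd2
        _ = 2 * Real.sqrt (ρ ^ 2 - rn N ^ 2) := by
            rw [show (4 : ℝ) * (ρ ^ 2 - rn N ^ 2) = 2 ^ 2 * (ρ ^ 2 - rn N ^ 2) by ring,
              Real.sqrt_mul (by positivity), Real.sqrt_sq (by norm_num)]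
    · have h1 : Tendsto (fun N => ρ ^ 2 - rn N ^ 2) atTop (nhds 0) := by
        have h2 : Tendsto (fun N => rn N ^ 2) atTop (nhds (ρ ^ 2)) :=
          ((continuous_pow 2).tendsto ρ).comp htρ
        have := (tendsto_const_nhds (x := ρ ^ 2) (f := atTop (α := ℕ))).sub h2
        simpa using this
      have := (Real.continuous_sqrt.tendsto 0).comp h1
      have h3 := this.const_mul (2 : ℝ)
      simpa using h3
  obtain ⟨cl, hcl⟩ := cauchySeq_tendsto_of_complete hcauchy
  have hcover : B ⊆ closedBall cl ρ := by
    rw [hdense]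
    apply closure_minimal _ isClosed_closedBall
    intro x hx
    obtain ⟨n, hxn⟩ := Set.mem_iUnion.mp hx
    rw [mem_closedBall]
    have hev : ∀ m ≥ n, dist x (c m) ≤ ρ :=
      fun m hm => le_trans (hcspec m (hmono hm hxn)) (hrnρ m)
    exact le_of_tendsto (tendsto_const_nhds.dist hcl) (eventually_atTop.mpr ⟨n, hev⟩)
  have hrρ : r = ρ := le_antisymm (circumradius_le' hρ0 hcover) hρr
  have htr : Tendsto rn atTop (nhds r) := hrρ ▸ htρ
  have hclcover : B ⊆ closedBall cl r := hrρ ▸ hcover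
  have hcc : cl = circumcenter B :=
    circumcenter_unique' hX hBne hclcover
      (Classical.epsilon_spec (⟨cl, hclcover⟩ : ∃ x : X, B ⊆ closedBall x (circumradius B)))
  exact ⟨htr, hcc ▸ hcl⟩
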